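/- arXiv:2106.02030 — 3 statements merged into one kernel-verified Lean document; each statement's English description precedes it below -/
import Mathlib

section
/- For the upper nominal trajectory with w = 1 and v ≤ v_up, h_U(t) = (a_up/2)t² + v·t for 0 ≤ t < T_up = (v_up - v)/a_up and h_U(t) = v_up·t - (v_up - v)²/(2a_up) for t ≥ T_up, any trajectory g with g(0) = 0 and g'(t) ≤ min(v + a_up·t, max(v_up, v)) for all t ≥ 0 satisfies g(t) ≤ h_U(t) for all t ≥ 0. -/
theorem stmt9 (a_up v v_up : ℝ) (ha : 0 < a_up) (hv : v ≤ v_up)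
    (hU g : ℝ → ℝ)
    (hUdef : ∀ t, hU t = if t < (v_up - v) / a_up then a_up / 2 * t ^ 2 + v * t
                         else v_up * t - (v_up - v) ^ 2 / (2 * a_up))
    (hg : Differentiable ℝ g) (hg0 : g 0 = 0)
    (hg' : ∀ t, 0 ≤ t → deriv g t ≤ min (v + a_up * t) v_up) :
    ∀ t, 0 ≤ t → g t ≤ hU t := by
  set T := (v_up - v) / a_up with hT
  have hT0 : 0 ≤ T := div_nonneg (by linarith) ha.le
  -- quadratic bound for all t ≥ 0
  have hA : ∀ s, 0 ≤ s → g s ≤ a_up / 2 * s ^ 2 + v * s := by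
    have hmono : MonotoneOn (fun x => a_up / 2 * x ^ 2 + v * x - g x) (Set.Ici (0:ℝ)) := by
      apply monotoneOn_of_deriv_nonneg (convex_Ici 0)
      · exact ((by continuity : Continuous fun x : ℝ => a_up / 2 * x ^ 2 + v * x).sub
          hg.continuous).continuousOn
      · exact (((by fun_prop : Differentiable ℝ fun x : ℝ => a_up / 2 * x ^ 2 + v * x).sub
          hg).differentiableOn).mono interior_subset
      · intro x hx
        rw [interior_Ici] at hx
        have h1 : HasDerivAt (fun x : ℝ => a_up / 2 * x ^ 2 + v * x) (a_up * x + v) x := by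
          have := ((hasDerivAt_pow 2 x).const_mul (a_up / 2)).add
            ((hasDerivAt_id x).const_mul v)
          exact this.congr_deriv (by norm_num [mul_comm]; ring)
        have hd : deriv (fun x => a_up / 2 * x ^ 2 + v * x - g x) x
            = a_up * x + v - deriv g x := (h1.sub (hg x).hasDerivAt).deriv
        rw [hd]
        have := (hg' x hx.le).trans (min_le_left _ _)
        linarith
    intro s hs
    have := hmono (Set.self_mem_Ici) (Set.mem_Ici.mpr hs) hs
    simp [hg0] at this
    linarith
  -- linear bound: v_up * x - g x is monotone on [0, ∞)
  have hB : MonotoneOn (fun x => v_up * x - g x) (Set.Ici (0:ℝ)) := by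
    apply monotoneOn_of_deriv_nonneg (convex_Ici 0)
    · exact ((continuous_const.mul continuous_id).sub hg.continuous).continuousOn
    · exact (((differentiable_const _).mul differentiable_id).sub hg).differentiableOn.mono
        interior_subset
    · intro x hx
      rw [interior_Ici] at hx
      have h1 : HasDerivAt (fun x : ℝ => v_up * x) v_up x := by
        simpa using (hasDerivAt_id x).const_mul v_up
      have hd : deriv (fun x => v_up * x - g x) x = v_up - deriv g x :=
        (h1.sub (hg x).hasDerivAt).deriv
      rw [hd]
      have := (hg' x hx.le).trans (min_le_right _ _)
      linarith
  intro t ht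
  rw [hUdef]
  by_cases h : t < T
  · rw [if_pos h]
    exact hA t ht
  · rw [if_neg h]
    push_neg at h
    have hBt := hB (Set.mem_Ici.mpr hT0) (Set.mem_Ici.mpr ht) h
    simp only at hBt
    have hAT := hA T hT0
    have hTid : a_up / 2 * T ^ 2 + v * T - v_up * T = -((v_up - v) ^ 2 / (2 * a_up)) := by
      rw [hT]
      field_simp
      ring
    linarith
end

section
/- Loop invariance of the safe region under advisory compliance: suppose L(r, h, v) := ∀ t ≥ 0, |r - r_v·t| > r_p ∨ h_n(t; v) - h > h_p holds, where h_n(t; v) is the nominal altitude starting at velocity v with v ≤ v_lo. Then after time τ ≥ 0 of minimally-compliant flight (new state r' = r - r_v·τ, h' = h - h_n(τ; v), v' = min(v + a_lo·τ, v_lo)), the region L(r', h', v') holds again, because h_n(t; v') + h_n(τ; v) = h_n(t + τ; v) for all t ≥ 0. -/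
theorem stmt14 (r_p h_p r_v a_lo v v_lo r h τ : ℝ)
    (hrp : 0 ≤ r_p) (hhp : 0 < h_p) (hrv : 0 ≤ r_v) (ha : 0 < a_lo)
    (hv : v ≤ v_lo) (hτ : 0 ≤ τ)
    (hn : ℝ → ℝ → ℝ)
    (hndef : ∀ t u, hn t u = if t ≤ (v_lo - u) / a_lo then a_lo / 2 * t ^ 2 + u * t
                             else v_lo * t - (v_lo - u) ^ 2 / (2 * a_lo))
    (hL : ∀ t, 0 ≤ t → |r - r_v * t| > r_p ∨ hn t v - h > h_p) :
    ∀ t, 0 ≤ t →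
      |(r - r_v * τ) - r_v * t| > r_p ∨
      hn t (min (v + a_lo * τ) v_lo) - (h - hn τ v) > h_p := by
  intro t ht
  have ha0 : a_lo ≠ 0 := ne_of_gt ha
  have key : hn t (min (v + a_lo * τ) v_lo) + hn τ v = hn (t + τ) v := by
    rcases le_or_gt (v + a_lo * τ) v_lo with hc | hc
    · have hmin : min (v + a_lo * τ) v_lo = v + a_lo * τ := min_eq_left hc
      rw [hmin, hndef, hndef, hndef]
      have hτle : τ ≤ (v_lo - v) / a_lo := by
        rw [le_div_iff₀ ha]; linarith
      rw [if_pos hτle]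
      have hiff : t ≤ (v_lo - (v + a_lo * τ)) / a_lo ↔ t + τ ≤ (v_lo - v) / a_lo := by
        rw [le_div_iff₀ ha, le_div_iff₀ ha]; constructor <;> intro <;> nlinarith
      by_cases hcase : t + τ ≤ (v_lo - v) / a_lo
      · rw [if_pos (hiff.mpr hcase), if_pos hcase]; ring
      · rw [if_neg (fun hx => hcase (hiff.mp hx)), if_neg hcase]
        field_simp; ring
    · have hmin : min (v + a_lo * τ) v_lo = v_lo := min_eq_right (le_of_lt hc)
      have hτgt : ¬ τ ≤ (v_lo - v) / a_lo := fun hx => by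
        rw [le_div_iff₀ ha] at hx; nlinarith
      have hτgt' : (v_lo - v) / a_lo < τ := lt_of_not_ge hτgt
      have hval : hn t v_lo = v_lo * t := by
        rw [hndef]
        split_ifs with h1
        · have ht0 : t = 0 := le_antisymm (by simpa using h1) ht
          subst ht0; ring
        · ring
      rw [hmin, hval, hndef, hndef, if_neg hτgt,
        if_neg (by push_neg; linarith)]
      ring
  rcases hL (t + τ) (by linarith) with hc | hc
  · left
    have : r - r_v * τ - r_v * t = r - r_v * (t + τ) := by ring
    rw [this]; exact hc
  · right; linarith
end

section
/- Semigroup property of the nominal trajectory: for a_lo > 0, v ≤ v_lo, and τ, t ≥ 0, the nominal altitude function satisfies h_n(τ + t; v) = h_n(τ; v) + h_n(t; v_τ) where v_τ = min(v + a_lo·τ, v_lo) is the nominal velocity at time τ. -/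
theorem stmt15 (a_lo v v_lo τ t : ℝ) (ha : 0 < a_lo) (hv : v ≤ v_lo)
    (hτ : 0 ≤ τ) (ht : 0 ≤ t)
    (hn : ℝ → ℝ → ℝ)
    (hndef : ∀ s u, hn s u = if s ≤ (v_lo - u) / a_lo then a_lo / 2 * s ^ 2 + u * s
                             else v_lo * s - (v_lo - u) ^ 2 / (2 * a_lo)) :
    hn (τ + t) v = hn τ v + hn t (min (v + a_lo * τ) v_lo) := by
  have ha' : a_lo ≠ 0 := ne_of_gt ha
  have hta : 0 ≤ t * a_lo := mul_nonneg ht ha.le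
  have hτa : 0 ≤ τ * a_lo := mul_nonneg hτ ha.le
  rcases le_total (v + a_lo * τ) v_lo with h | h
  · rw [min_eq_left h]
    simp only [hndef, le_div_iff₀ ha]
    split_ifs <;>
      first
        | ring1
        | (exfalso; nlinarith)
        | (field_simp; ring1)
  · rw [min_eq_right h]
    simp only [hndef, le_div_iff₀ ha]
    split_ifs <;>
      first
        | ring1
        | (exfalso; nlinarith)
        | (field_simp; ring1)
        | (have ht0 : t = 0 := by nlinarith
           subst ht0
           first | ring1 | (field_simp; ring1))
        | (have hv' : v = v_lo - τ * a_lo := by linarith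
           subst hv'
           field_simp
           ring1)
end
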